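/- Let s ∈ (0,1), p ≥ 1 with sp < d, and γ_s = d·c_d^{1+sp/d}/(sp) where c_d = |B(0,1)|. For every measurable set E ⊂ ℝ^d with |E| < ∞ and every x ∈ ℝ^d, ∫_{E^c} |x−y|^{−d−sp} dy ≥ γ_s |E|^{−sp/d}. -/

import Mathlib

open MeasureTheory ENNReal

open Metric Set

lemma aux_integrableOn {d : ℕ} (hd : 1 ≤ d) {q r : ℝ} (hq : (d : ℝ) < q) (hr : 0 < r) :
    IntegrableOn (fun z : EuclideanSpace ℝ (Fin d) => ‖z‖ ^ (-q)) (ball 0 r)ᶜ volume := by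
  have hq0 : 0 < q := lt_of_le_of_lt (by positivity) hq
  have h1 : Integrable (fun z : EuclideanSpace ℝ (Fin d) =>
      ((1 + r) / r) ^ q * (1 + ‖z‖) ^ (-q)) volume :=
    (integrable_one_add_norm (by rwa [finrank_euclideanSpace_fin])).const_mul _
  refine (h1.integrableOn).mono' (Measurable.aestronglyMeasurable (by fun_prop)) ?_
  filter_upwards [ae_restrict_mem measurableSet_ball.compl] with z hz
  have hz' : r ≤ ‖z‖ := by simpa [not_lt] using (mem_ball_zero_iff.not.mp hz)
  have hzpos : 0 < ‖z‖ := hr.trans_le hz'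
  have key : ‖z‖⁻¹ ≤ ((1 + r) / r) * (1 + ‖z‖)⁻¹ := by
    have h1z : (0:ℝ) < 1 + ‖z‖ := by positivity
    rw [inv_eq_one_div ‖z‖, div_mul_eq_mul_div, div_le_div_iff₀ hzpos hr,
      mul_comm (1 + r) (1 + ‖z‖)⁻¹, mul_assoc, ← div_eq_inv_mul, le_div_iff₀ h1z]
    nlinarith
  calc ‖(‖z‖ : ℝ) ^ (-q)‖ = (‖z‖⁻¹) ^ q := by
        rw [Real.norm_eq_abs, abs_of_nonneg (Real.rpow_nonneg (norm_nonneg z) _),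
          Real.rpow_neg (norm_nonneg z), ← Real.inv_rpow (norm_nonneg z)]
    _ ≤ (((1 + r) / r) * (1 + ‖z‖)⁻¹) ^ q :=
        Real.rpow_le_rpow (by positivity) key hq0.le
    _ = ((1 + r) / r) ^ q * (1 + ‖z‖) ^ (-q) := by
        rw [Real.mul_rpow (by positivity) (by positivity),
          Real.rpow_neg (by positivity), ← Real.inv_rpow (by positivity)]

lemma aux_val {d : ℕ} (hd : 1 ≤ d) {q r : ℝ} (hq : (d : ℝ) < q) (hr : 0 < r) :
    ∫ z in (ball (0 : EuclideanSpace ℝ (Fin d)) r)ᶜ, ‖z‖ ^ (-q) =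
      (d : ℝ) * (volume (ball (0 : EuclideanSpace ℝ (Fin d)) 1)).toReal *
        (r ^ ((d : ℝ) - q) / (q - d)) := by
  have hne : Nonempty (Fin d) := ⟨⟨0, hd⟩⟩
  have hnt : Nontrivial (EuclideanSpace ℝ (Fin d)) := inferInstance
  set f : ℝ → ℝ := Set.indicator (Ici r) (fun t => t ^ (-q)) with hf
  have hpolar := integral_fun_norm_addHaar (volume : Measure (EuclideanSpace ℝ (Fin d))) f
  have h1 : (fun z : EuclideanSpace ℝ (Fin d) => f ‖z‖) =
      ((ball (0 : EuclideanSpace ℝ (Fin d)) r)ᶜ).indicator (fun z => ‖z‖ ^ (-q)) := by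
    ext z
    by_cases h : r ≤ ‖z‖ <;>
      simp [hf, Set.indicator, mem_ball_zero_iff, not_lt, h]
  rw [h1, integral_indicator measurableSet_ball.compl] at hpolar
  rw [hpolar, finrank_euclideanSpace_fin]
  have h2 : ∀ y : ℝ, y ^ (d - 1) • f y =
      Set.indicator (Ici r) (fun t => t ^ (d - 1) * t ^ (-q)) y := by
    intro y
    by_cases h : y ∈ Ici r <;> simp [hf, Set.indicator, h, smul_eq_mul]
  have h3 : ∫ y in Ioi (0:ℝ), y ^ (d - 1) • f y = r ^ ((d : ℝ) - q) / (q - d) := by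
    have hsub : Ici r ⊆ Ioi (0:ℝ) := fun y hy => hr.trans_le hy
    simp_rw [h2]
    rw [setIntegral_indicator measurableSet_Ici,
      Set.inter_eq_self_of_subset_right hsub,
      integral_Ici_eq_integral_Ioi,
      setIntegral_congr_fun measurableSet_Ioi (g := fun y : ℝ => y ^ ((d:ℝ) - 1 - q))
        (fun y (hy : r < y) => by
          rw [← Real.rpow_natCast y (d - 1), ← Real.rpow_add (hr.trans hy)]
          congr 1
          push_cast [Nat.cast_sub hd]
          ring),
      integral_Ioi_rpow_of_lt (by linarith) hr]
    rw [show (d:ℝ) - 1 - q + 1 = (d:ℝ) - q by ring]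
    rw [div_eq_div_iff (by linarith) (by linarith)]
    ring
  rw [h3, nsmul_eq_mul, smul_eq_mul, mul_assoc, measureReal_def]

lemma aux_lint {d : ℕ} (hd : 1 ≤ d) {q r : ℝ} (hq : (d : ℝ) < q) (hr : 0 < r) :
    ∫⁻ z in (ball (0 : EuclideanSpace ℝ (Fin d)) r)ᶜ, ENNReal.ofReal (‖z‖ ^ (-q)) =
      ENNReal.ofReal ((d : ℝ) * (volume (ball (0 : EuclideanSpace ℝ (Fin d)) 1)).toReal *
        (r ^ ((d : ℝ) - q) / (q - d))) := by
  rw [← ofReal_integral_eq_lintegral_ofReal (aux_integrableOn hd hq hr)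
    (ae_of_all _ fun z => Real.rpow_nonneg (norm_nonneg z) _), aux_val hd hq hr]

lemma aux_rearrange {α : Type*} [MeasurableSpace α] (μ : Measure α) {E B : Set α}
    (hE : MeasurableSet E) (hB : MeasurableSet B) (hEB : μ E = μ B) (hfin : μ B ≠ ⊤)
    {k : α → ℝ≥0∞} (c : ℝ≥0∞)
    (hlow : ∀ᵐ y ∂μ.restrict B, c ≤ k y) (hup : ∀ y ∈ Bᶜ, k y ≤ c) :
    ∫⁻ y in Bᶜ, k y ∂μ ≤ ∫⁻ y in Eᶜ, k y ∂μ := by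
  have split : ∀ (T S : Set α), MeasurableSet T →
      ∫⁻ y in S, k y ∂μ = ∫⁻ y in T ∩ S, k y ∂μ + ∫⁻ y in Tᶜ ∩ S, k y ∂μ := by
    intro T S hT
    rw [← Measure.restrict_restrict hT, ← Measure.restrict_restrict hT.compl,
      lintegral_add_compl _ hT]
  have hmeq : μ (E ∩ Bᶜ) = μ (Eᶜ ∩ B) := by
    have h1 : μ (E ∩ B) + μ (E ∩ Bᶜ) = μ E := by
      rw [← Set.diff_eq, measure_inter_add_diff E hB]
    have h2 : μ (E ∩ B) + μ (Eᶜ ∩ B) = μ B := by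
      rw [Set.inter_comm E B, Set.inter_comm Eᶜ B, ← Set.diff_eq, measure_inter_add_diff B hE]
    have hEBfin : μ (E ∩ B) ≠ ⊤ := fun h => hfin (top_le_iff.mp (h ▸ measure_mono
      Set.inter_subset_right))
    exact ENNReal.add_right_inj hEBfin |>.mp (h1.trans (hEB.trans h2.symm))
  have hup' : ∫⁻ y in E ∩ Bᶜ, k y ∂μ ≤ c * μ (E ∩ Bᶜ) := by
    refine le_trans (setLIntegral_mono_ae (by fun_prop)
      (ae_of_all _ fun y hy => hup y hy.2)) (le_of_eq (setLIntegral_const _ _))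
  have hlow' : c * μ (Eᶜ ∩ B) ≤ ∫⁻ y in Eᶜ ∩ B, k y ∂μ := by
    rw [← setLIntegral_const]
    refine lintegral_mono_ae ?_
    exact ae_mono (Measure.restrict_mono Set.inter_subset_right le_rfl) hlow
  calc ∫⁻ y in Bᶜ, k y ∂μ
      = ∫⁻ y in E ∩ Bᶜ, k y ∂μ + ∫⁻ y in Eᶜ ∩ Bᶜ, k y ∂μ := split E Bᶜ hE
    _ ≤ c * μ (E ∩ Bᶜ) + ∫⁻ y in Eᶜ ∩ Bᶜ, k y ∂μ := add_le_add_left hup' _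
    _ = c * μ (Eᶜ ∩ B) + ∫⁻ y in Eᶜ ∩ Bᶜ, k y ∂μ := by rw [hmeq]
    _ ≤ ∫⁻ y in Eᶜ ∩ B, k y ∂μ + ∫⁻ y in Eᶜ ∩ Bᶜ, k y ∂μ := add_le_add_left hlow' _
    _ = ∫⁻ y in B ∩ Eᶜ, k y ∂μ + ∫⁻ y in Bᶜ ∩ Eᶜ, k y ∂μ := by
        rw [Set.inter_comm Eᶜ B, Set.inter_comm Eᶜ Bᶜ]
    _ = ∫⁻ y in Eᶜ, k y ∂μ := (split B Eᶜ hB).symm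

/-- for `s ∈ (0,1)`, `p ≥ 1` with `sp < d`, every measurable set `E` of finite
measure and every `x`, `∫_{E^c} |x−y|^{−d−sp} dy ≥ γ_s |E|^{−sp/d}` with
`γ_s = d c_d^{1+sp/d}/(sp)`. -/
theorem stmt_14 {d : ℕ} (hd : 1 ≤ d) (s p : ℝ) (hs : s ∈ Set.Ioo (0 : ℝ) 1) (hp : 1 ≤ p)
    (hsp : s * p < d) (E : Set (EuclideanSpace ℝ (Fin d))) (hE : MeasurableSet E)
    (hEfin : volume E < ⊤) (x : EuclideanSpace ℝ (Fin d)) :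
    ENNReal.ofReal ((d : ℝ) *
        (volume (Metric.ball (0 : EuclideanSpace ℝ (Fin d)) 1)).toReal ^ (1 + s * p / d) /
          (s * p) * (volume E).toReal ^ (-(s * p) / d)) ≤
      ∫⁻ y in Eᶜ, ENNReal.ofReal (‖x - y‖ ^ (-(d : ℝ) - s * p)) := by
  obtain ⟨hs0, hs1⟩ := hs
  have hsp0 : 0 < s * p := mul_pos hs0 (lt_of_lt_of_le one_pos hp)
  have hd0 : (0 : ℝ) < d := by exact_mod_cast hd
  set q : ℝ := (d : ℝ) + s * p with hqdef
  have hq : (d : ℝ) < q := by simp only [hqdef]; linarith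
  have hexp : -(d : ℝ) - s * p = -q := by simp only [hqdef]; ring
  rcases eq_or_ne (volume E) 0 with hE0 | hE0
  · rw [hE0]
    have hd0' : -(s * p) / (d:ℝ) ≠ 0 := by
      have : (0:ℝ) < d := by exact_mod_cast hd
      exact div_ne_zero (by linarith) this.ne'
    simp [Real.zero_rpow hd0']
  haveI : Nonempty (Fin d) := ⟨⟨0, hd⟩⟩
  set c : ℝ := (volume (ball (0 : EuclideanSpace ℝ (Fin d)) 1)).toReal with hcdef
  have hcpos : 0 < c :=
    ENNReal.toReal_pos (measure_ball_pos volume 0 one_pos).ne' measure_ball_lt_top.ne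
  set m : ℝ := (volume E).toReal with hmdef
  have hm : 0 < m := ENNReal.toReal_pos hE0 hEfin.ne
  set r : ℝ := (m / c) ^ ((d : ℝ)⁻¹) with hrdef
  have hr : 0 < r := Real.rpow_pos_of_pos (by positivity) _
  -- the ball of radius r has the same volume as E
  have hvol : volume E = volume (ball x r) := by
    rw [volume.addHaar_ball x hr.le, finrank_euclideanSpace_fin]
    have hrd : r ^ d = m / c := by
      rw [hrdef, ← Real.rpow_natCast ((m / c) ^ ((d:ℝ)⁻¹)) d, ← Real.rpow_mul (by positivity),
        inv_mul_cancel₀ hd0.ne', Real.rpow_one]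
    rw [hrd, show volume (ball (0 : EuclideanSpace ℝ (Fin d)) 1) = ENNReal.ofReal c from
      (ENNReal.ofReal_toReal measure_ball_lt_top.ne).symm,
      ← ENNReal.ofReal_mul (by positivity), div_mul_cancel₀ m hcpos.ne',
      hmdef, ENNReal.ofReal_toReal hEfin.ne]
  -- a.e. positivity of ‖x - y‖
  have hne : ∀ᵐ (y : EuclideanSpace ℝ (Fin d)) ∂volume, y ≠ x := by
    rw [ae_iff]
    simpa using measure_singleton x
  -- rearrangement
  have hrear : ∫⁻ y in (ball x r)ᶜ, ENNReal.ofReal (‖x - y‖ ^ (-q)) ≤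
      ∫⁻ y in Eᶜ, ENNReal.ofReal (‖x - y‖ ^ (-q)) := by
    refine aux_rearrange volume hE measurableSet_ball hvol
      (hvol ▸ hEfin.ne) (ENNReal.ofReal (r ^ (-q))) ?_ ?_
    · filter_upwards [ae_restrict_mem measurableSet_ball, ae_restrict_of_ae hne] with y hy hy'
      have h1 : 0 < ‖x - y‖ := by
        rw [norm_pos_iff]
        exact sub_ne_zero.mpr (Ne.symm hy')
      have h2 : ‖x - y‖ ≤ r := by
        rw [norm_sub_rev, ← dist_eq_norm]
        exact (mem_ball.mp hy).le
      exact ENNReal.ofReal_le_ofReal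
        (Real.rpow_le_rpow_of_nonpos h1 h2 (by linarith : -q ≤ 0))
    · intro y hy
      have h2 : r ≤ ‖x - y‖ := by
        rw [norm_sub_rev, ← dist_eq_norm]
        exact not_lt.mp (fun h => hy (mem_ball.mpr h))
      exact ENNReal.ofReal_le_ofReal
        (Real.rpow_le_rpow_of_nonpos hr h2 (by linarith : -q ≤ 0))
  -- translation invariance
  have htrans : ∫⁻ y in (ball x r)ᶜ, ENNReal.ofReal (‖x - y‖ ^ (-q)) =
      ∫⁻ z in (ball (0 : EuclideanSpace ℝ (Fin d)) r)ᶜ, ENNReal.ofReal (‖z‖ ^ (-q)) := by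
    have hmp : MeasurePreserving (fun y : EuclideanSpace ℝ (Fin d) => x - y) volume volume :=
      Measure.measurePreserving_sub_left volume x
    have hpre : (fun y : EuclideanSpace ℝ (Fin d) => x - y) ⁻¹'
        (ball (0 : EuclideanSpace ℝ (Fin d)) r)ᶜ = (ball x r)ᶜ := by
      ext y
      simp [mem_ball, mem_ball_zero_iff, dist_eq_norm, norm_sub_rev x y]
    have hmeas : Measurable fun z : EuclideanSpace ℝ (Fin d) => ENNReal.ofReal (‖z‖ ^ (-q)) :=
      ENNReal.measurable_ofReal.comp (by fun_prop)
    rw [← hpre]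
    exact hmp.setLIntegral_comp_preimage measurableSet_ball.compl hmeas
  -- the real-number computation
  have hreal : (d : ℝ) * c ^ (1 + s * p / d) / (s * p) * m ^ (-(s * p) / d) =
      (d : ℝ) * c * (r ^ ((d : ℝ) - q) / (q - d)) := by
    have hrpow : r ^ ((d : ℝ) - q) = c ^ (s * p / d) / m ^ (s * p / d) := by
      rw [show (d : ℝ) - q = -(s * p) from by simp only [hqdef]; ring, hrdef,
        ← Real.rpow_mul (by positivity),
        show (d : ℝ)⁻¹ * -(s * p) = -(s * p / d) from by field_simp,
        Real.rpow_neg (by positivity), Real.div_rpow hm.le hcpos.le, inv_div]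
    rw [hrpow, show q - (d : ℝ) = s * p from by simp only [hqdef]; ring,
      show (1 : ℝ) + s * p / d = 1 + s * p / d from rfl,
      Real.rpow_add hcpos 1 (s * p / d), Real.rpow_one,
      show -(s * p) / d = -(s * p / d) from by ring,
      Real.rpow_neg hm.le]
    field_simp
  -- put everything together
  calc ENNReal.ofReal ((d : ℝ) * c ^ (1 + s * p / d) / (s * p) * m ^ (-(s * p) / d))
      = ENNReal.ofReal ((d : ℝ) * c * (r ^ ((d : ℝ) - q) / (q - d))) := by rw [hreal]
    _ = ∫⁻ z in (ball (0 : EuclideanSpace ℝ (Fin d)) r)ᶜ, ENNReal.ofReal (‖z‖ ^ (-q)) :=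
        (aux_lint hd hq hr).symm
    _ = ∫⁻ y in (ball x r)ᶜ, ENNReal.ofReal (‖x - y‖ ^ (-q)) := htrans.symm
    _ ≤ ∫⁻ y in Eᶜ, ENNReal.ofReal (‖x - y‖ ^ (-q)) := hrear
    _ = ∫⁻ y in Eᶜ, ENNReal.ofReal (‖x - y‖ ^ (-(d : ℝ) - s * p)) := by rw [hexp]
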